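/- Let n ≥ 2 and r ≥ 1 be integers and q, q̃ constant diagonal n×n complex matrices with diagonal entries q_a and q̃_a. Let U ⊆ ℂ³ be open with coordinates (z, s, t), and let p, H : U → M_n(ℂ) be holomorphic, where p is diagonal with pairwise distinct diagonal entries p_a at every point and H has all diagonal entries zero. Define G, G̃ : U → M_n(ℂ) entrywise by G_{ab} = z·H_{ab}·(q_a − q_b)/(p_a − p_b) and G̃_{ab} = z·H_{ab}·(q̃_a − q̃_b)/(p_a − p_b) for a ≠ b, with zero diagonal entries. Assume ∂_s p = −r·q, ∂_t p = −r·q̃, ∂_s H = ∂_z G − [H, G], and ∂_t H = ∂_z G̃ − [H, G̃] on U. Then ∂_s G̃ − ∂_t G = [G, G̃] on U. -/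
import Mathlib


/-- Entrywise partial derivative in the first variable `z` of a matrix-valued
function of `(z, s, t) ∈ ℂ × ℂ × ℂ`. -/
noncomputable def partialZ3 {n : ℕ} (F : ℂ × ℂ × ℂ → Matrix (Fin n) (Fin n) ℂ)
    (w : ℂ × ℂ × ℂ) : Matrix (Fin n) (Fin n) ℂ :=
  Matrix.of fun a b => deriv (fun z : ℂ => F (z, w.2.1, w.2.2) a b) w.1

/-- Entrywise partial derivative in the second variable `s`. -/
noncomputable def partialS3 {n : ℕ} (F : ℂ × ℂ × ℂ → Matrix (Fin n) (Fin n) ℂ)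
    (w : ℂ × ℂ × ℂ) : Matrix (Fin n) (Fin n) ℂ :=
  Matrix.of fun a b => deriv (fun s : ℂ => F (w.1, s, w.2.2) a b) w.2.1

/-- Entrywise partial derivative in the third variable `t`. -/
noncomputable def partialT3 {n : ℕ} (F : ℂ × ℂ × ℂ → Matrix (Fin n) (Fin n) ℂ)
    (w : ℂ × ℂ × ℂ) : Matrix (Fin n) (Fin n) ℂ :=
  Matrix.of fun a b => deriv (fun t : ℂ => F (w.1, w.2.1, t) a b) w.2.2

/-- The integrability identity `∂_i H_j - ∂_j H_i = [H_i, H_j]` from the proof of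
Proposition 2 of the paper: with `G, G̃` built from `H` and the constant diagonal
matrices `q, q̃`, the evolution equations `∂_s p = -r q`, `∂_t p = -r q̃`,
`∂_s H = ∂_z G - [H,G]`, `∂_t H = ∂_z G̃ - [H,G̃]` imply
`∂_s G̃ - ∂_t G = [G, G̃]`. -/
theorem stmt7 (n r : ℕ) (hn : 2 ≤ n) (hr : 1 ≤ r) (q qt : Fin n → ℂ)
    (U : Set (ℂ × ℂ × ℂ)) (hU : IsOpen U)
    (p : ℂ × ℂ × ℂ → Fin n → ℂ) (H : ℂ × ℂ × ℂ → Matrix (Fin n) (Fin n) ℂ)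
    (hphol : ∀ a : Fin n, DifferentiableOn ℂ (fun w => p w a) U)
    (hHhol : ∀ a b : Fin n, DifferentiableOn ℂ (fun w => H w a b) U)
    (hpdist : ∀ w ∈ U, ∀ a b : Fin n, a ≠ b → p w a ≠ p w b)
    (hHoffdiag : ∀ w ∈ U, ∀ a : Fin n, H w a a = 0)
    (G Gt : ℂ × ℂ × ℂ → Matrix (Fin n) (Fin n) ℂ)
    (hG : ∀ w ∈ U, ∀ a b : Fin n,
      G w a b = if a = b then 0 else w.1 * H w a b * (q a - q b) / (p w a - p w b))
    (hGt : ∀ w ∈ U, ∀ a b : Fin n,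
      Gt w a b = if a = b then 0 else w.1 * H w a b * (qt a - qt b) / (p w a - p w b))
    (hps : ∀ w ∈ U, ∀ a : Fin n,
      HasDerivAt (fun s : ℂ => p (w.1, s, w.2.2) a) (-(r : ℂ) * q a) w.2.1)
    (hpt : ∀ w ∈ U, ∀ a : Fin n,
      HasDerivAt (fun t : ℂ => p (w.1, w.2.1, t) a) (-(r : ℂ) * qt a) w.2.2)
    (hHs : ∀ w ∈ U, ∀ a b : Fin n,
      HasDerivAt (fun s : ℂ => H (w.1, s, w.2.2) a b)
        ((partialZ3 G w - (H w * G w - G w * H w)) a b) w.2.1)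
    (hHt : ∀ w ∈ U, ∀ a b : Fin n,
      HasDerivAt (fun t : ℂ => H (w.1, w.2.1, t) a b)
        ((partialZ3 Gt w - (H w * Gt w - Gt w * H w)) a b) w.2.2) :
    ∀ w ∈ U, partialS3 Gt w - partialT3 G w = G w * Gt w - Gt w * G w := by
  rintro ⟨z, s, t⟩ hw
  -- eventual membership along each coordinate line
  have hmemZ : ∀ᶠ x in nhds z, (x, s, t) ∈ U := by
    have hc : Continuous fun x : ℂ => ((x, s, t) : ℂ × ℂ × ℂ) := by fun_prop
    exact hc.continuousAt.preimage_mem_nhds (hU.mem_nhds hw)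
  have hmemS : ∀ᶠ x in nhds s, (z, x, t) ∈ U := by
    have hc : Continuous fun x : ℂ => ((z, x, t) : ℂ × ℂ × ℂ) := by fun_prop
    exact hc.continuousAt.preimage_mem_nhds (hU.mem_nhds hw)
  have hmemT : ∀ᶠ x in nhds t, (z, s, x) ∈ U := by
    have hc : Continuous fun x : ℂ => ((z, s, x) : ℂ × ℂ × ℂ) := by fun_prop
    exact hc.continuousAt.preimage_mem_nhds (hU.mem_nhds hw)
  -- differentiability along z
  have hline : DifferentiableAt ℂ (fun x : ℂ => ((x, s, t) : ℂ × ℂ × ℂ)) z :=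
    differentiableAt_id.prodMk (differentiableAt_const _)
  have hHdiff : ∀ a b : Fin n, DifferentiableAt ℂ (fun x : ℂ => H (x, s, t) a b) z := by
    intro a b
    exact ((hHhol a b).differentiableAt (hU.mem_nhds hw)).comp z hline
  have hpdiff : ∀ a : Fin n, DifferentiableAt ℂ (fun x : ℂ => p (x, s, t) a) z := by
    intro a
    exact ((hphol a).differentiableAt (hU.mem_nhds hw)).comp z hline
  have hne : ∀ a b : Fin n, a ≠ b → p (z, s, t) a - p (z, s, t) b ≠ 0 := fun a b hab =>
    sub_ne_zero.mpr (hpdist _ hw a b hab)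
  -- partialZ3 of G
  have hGz : ∀ a b : Fin n, a ≠ b → partialZ3 G (z, s, t) a b =
      ((1 * H (z, s, t) a b + z * deriv (fun x : ℂ => H (x, s, t) a b) z) * (q a - q b) *
          (p (z, s, t) a - p (z, s, t) b) -
        z * H (z, s, t) a b * (q a - q b) *
          (deriv (fun x : ℂ => p (x, s, t) a) z - deriv (fun x : ℂ => p (x, s, t) b) z)) /
        (p (z, s, t) a - p (z, s, t) b) ^ 2 := by
    intro a b hab
    have hnum : HasDerivAt (fun x : ℂ => x * H (x, s, t) a b * (q a - q b))
        ((1 * H (z, s, t) a b + z * deriv (fun x : ℂ => H (x, s, t) a b) z) * (q a - q b)) z :=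
      ((hasDerivAt_id z).mul (hHdiff a b).hasDerivAt).mul_const _
    have hden : HasDerivAt (fun x : ℂ => p (x, s, t) a - p (x, s, t) b)
        (deriv (fun x : ℂ => p (x, s, t) a) z - deriv (fun x : ℂ => p (x, s, t) b) z) z :=
      (hpdiff a).hasDerivAt.sub (hpdiff b).hasDerivAt
    have hdiv := hnum.div hden (hne a b hab)
    have heq : (fun x : ℂ => G (x, s, t) a b) =ᶠ[nhds z]
        fun x : ℂ => x * H (x, s, t) a b * (q a - q b) / (p (x, s, t) a - p (x, s, t) b) := by
      filter_upwards [hmemZ] with x hx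
      rw [hG _ hx a b, if_neg hab]
    have h2 := (hdiv.congr_of_eventuallyEq heq).deriv
    have h3 : partialZ3 G (z, s, t) a b = deriv (fun x : ℂ => G (x, s, t) a b) z := rfl
    rw [h3, h2]
  have hGtz : ∀ a b : Fin n, a ≠ b → partialZ3 Gt (z, s, t) a b =
      ((1 * H (z, s, t) a b + z * deriv (fun x : ℂ => H (x, s, t) a b) z) * (qt a - qt b) *
          (p (z, s, t) a - p (z, s, t) b) -
        z * H (z, s, t) a b * (qt a - qt b) *
          (deriv (fun x : ℂ => p (x, s, t) a) z - deriv (fun x : ℂ => p (x, s, t) b) z)) /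
        (p (z, s, t) a - p (z, s, t) b) ^ 2 := by
    intro a b hab
    have hnum : HasDerivAt (fun x : ℂ => x * H (x, s, t) a b * (qt a - qt b))
        ((1 * H (z, s, t) a b + z * deriv (fun x : ℂ => H (x, s, t) a b) z) * (qt a - qt b)) z :=
      ((hasDerivAt_id z).mul (hHdiff a b).hasDerivAt).mul_const _
    have hden : HasDerivAt (fun x : ℂ => p (x, s, t) a - p (x, s, t) b)
        (deriv (fun x : ℂ => p (x, s, t) a) z - deriv (fun x : ℂ => p (x, s, t) b) z) z :=
      (hpdiff a).hasDerivAt.sub (hpdiff b).hasDerivAt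
    have hdiv := hnum.div hden (hne a b hab)
    have heq : (fun x : ℂ => Gt (x, s, t) a b) =ᶠ[nhds z]
        fun x : ℂ => x * H (x, s, t) a b * (qt a - qt b) / (p (x, s, t) a - p (x, s, t) b) := by
      filter_upwards [hmemZ] with x hx
      rw [hGt _ hx a b, if_neg hab]
    have h2 := (hdiv.congr_of_eventuallyEq heq).deriv
    have h3 : partialZ3 Gt (z, s, t) a b = deriv (fun x : ℂ => Gt (x, s, t) a b) z := rfl
    rw [h3, h2]
  -- partialS3 of Gt
  have hdS : ∀ a b : Fin n, a ≠ b → partialS3 Gt (z, s, t) a b =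
      ((0 * H (z, s, t) a b +
          z * ((partialZ3 G (z, s, t) -
            (H (z, s, t) * G (z, s, t) - G (z, s, t) * H (z, s, t))) a b)) * (qt a - qt b) *
          (p (z, s, t) a - p (z, s, t) b) -
        z * H (z, s, t) a b * (qt a - qt b) * (-(r : ℂ) * q a - -(r : ℂ) * q b)) /
        (p (z, s, t) a - p (z, s, t) b) ^ 2 := by
    intro a b hab
    have hnum : HasDerivAt (fun x : ℂ => z * H (z, x, t) a b * (qt a - qt b))
        ((0 * H (z, s, t) a b +
          z * ((partialZ3 G (z, s, t) -
            (H (z, s, t) * G (z, s, t) - G (z, s, t) * H (z, s, t))) a b)) * (qt a - qt b)) s :=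
      ((hasDerivAt_const s z).mul (hHs (z, s, t) hw a b)).mul_const _
    have hden : HasDerivAt (fun x : ℂ => p (z, x, t) a - p (z, x, t) b)
        (-(r : ℂ) * q a - -(r : ℂ) * q b) s :=
      (hps (z, s, t) hw a).sub (hps (z, s, t) hw b)
    have hdiv := hnum.div hden (hne a b hab)
    have heq : (fun x : ℂ => Gt (z, x, t) a b) =ᶠ[nhds s]
        fun x : ℂ => z * H (z, x, t) a b * (qt a - qt b) / (p (z, x, t) a - p (z, x, t) b) := by
      filter_upwards [hmemS] with x hx
      rw [hGt _ hx a b, if_neg hab]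
    have h2 := (hdiv.congr_of_eventuallyEq heq).deriv
    have h3 : partialS3 Gt (z, s, t) a b = deriv (fun x : ℂ => Gt (z, x, t) a b) s := rfl
    rw [h3, h2]
  -- partialT3 of G
  have hdT : ∀ a b : Fin n, a ≠ b → partialT3 G (z, s, t) a b =
      ((0 * H (z, s, t) a b +
          z * ((partialZ3 Gt (z, s, t) -
            (H (z, s, t) * Gt (z, s, t) - Gt (z, s, t) * H (z, s, t))) a b)) * (q a - q b) *
          (p (z, s, t) a - p (z, s, t) b) -
        z * H (z, s, t) a b * (q a - q b) * (-(r : ℂ) * qt a - -(r : ℂ) * qt b)) /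
        (p (z, s, t) a - p (z, s, t) b) ^ 2 := by
    intro a b hab
    have hnum : HasDerivAt (fun x : ℂ => z * H (z, s, x) a b * (q a - q b))
        ((0 * H (z, s, t) a b +
          z * ((partialZ3 Gt (z, s, t) -
            (H (z, s, t) * Gt (z, s, t) - Gt (z, s, t) * H (z, s, t))) a b)) * (q a - q b)) t :=
      ((hasDerivAt_const t z).mul (hHt (z, s, t) hw a b)).mul_const _
    have hden : HasDerivAt (fun x : ℂ => p (z, s, x) a - p (z, s, x) b)
        (-(r : ℂ) * qt a - -(r : ℂ) * qt b) t :=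
      (hpt (z, s, t) hw a).sub (hpt (z, s, t) hw b)
    have hdiv := hnum.div hden (hne a b hab)
    have heq : (fun x : ℂ => G (z, s, x) a b) =ᶠ[nhds t]
        fun x : ℂ => z * H (z, s, x) a b * (q a - q b) / (p (z, s, x) a - p (z, s, x) b) := by
      filter_upwards [hmemT] with x hx
      rw [hG _ hx a b, if_neg hab]
    have h2 := (hdiv.congr_of_eventuallyEq heq).deriv
    have h3 : partialT3 G (z, s, t) a b = deriv (fun x : ℂ => G (z, s, x) a b) t := rfl
    rw [h3, h2]
  -- diagonal derivatives vanish
  have hdSdiag : ∀ a : Fin n, partialS3 Gt (z, s, t) a a = 0 := by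
    intro a
    have heq : (fun x : ℂ => Gt (z, x, t) a a) =ᶠ[nhds s] fun _ => (0 : ℂ) := by
      filter_upwards [hmemS] with x hx
      rw [hGt _ hx a a, if_pos rfl]
    have h3 : partialS3 Gt (z, s, t) a a = deriv (fun x : ℂ => Gt (z, x, t) a a) s := rfl
    rw [h3, heq.deriv_eq, deriv_const]
  have hdTdiag : ∀ a : Fin n, partialT3 G (z, s, t) a a = 0 := by
    intro a
    have heq : (fun x : ℂ => G (z, s, x) a a) =ᶠ[nhds t] fun _ => (0 : ℂ) := by
      filter_upwards [hmemT] with x hx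
      rw [hG _ hx a a, if_pos rfl]
    have h3 : partialT3 G (z, s, t) a a = deriv (fun x : ℂ => G (z, s, x) a a) t := rfl
    rw [h3, heq.deriv_eq, deriv_const]
  -- key commutator sum identity
  have hsum : ∀ a b : Fin n, a ≠ b →
      z * (q a - q b) / (p (z, s, t) a - p (z, s, t) b) *
          ((H (z, s, t) * Gt (z, s, t)) a b - (Gt (z, s, t) * H (z, s, t)) a b) -
        z * (qt a - qt b) / (p (z, s, t) a - p (z, s, t) b) *
          ((H (z, s, t) * G (z, s, t)) a b - (G (z, s, t) * H (z, s, t)) a b) =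
      (G (z, s, t) * Gt (z, s, t)) a b - (Gt (z, s, t) * G (z, s, t)) a b := by
    intro a b hab
    simp only [Matrix.mul_apply]
    rw [← Finset.sum_sub_distrib, ← Finset.sum_sub_distrib, Finset.mul_sum, Finset.mul_sum,
      ← Finset.sum_sub_distrib, ← Finset.sum_sub_distrib]
    refine Finset.sum_congr rfl fun c _ => ?_
    rcases eq_or_ne c a with rfl | hca
    · rw [hHoffdiag _ hw, hG _ hw c c, hGt _ hw c c, if_pos rfl, if_pos rfl]
      ring
    rcases eq_or_ne c b with rfl | hcb
    · rw [hHoffdiag _ hw, hG _ hw c c, hGt _ hw c c, if_pos rfl, if_pos rfl]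
      ring
    rw [hG _ hw a c, hG _ hw c b, hGt _ hw a c, hGt _ hw c b, if_neg (Ne.symm hca),
      if_neg hcb, if_neg (Ne.symm hca), if_neg hcb]
    have h1 := hne a b hab
    have h2 := hne a c (Ne.symm hca)
    have h3 := hne c b hcb
    field_simp
    ring
  -- conclude entrywise
  ext a b
  rw [Matrix.sub_apply, Matrix.sub_apply]
  rcases eq_or_ne a b with rfl | hab
  · rw [hdSdiag, hdTdiag, Matrix.mul_apply, Matrix.mul_apply, ← Finset.sum_sub_distrib, sub_self]
    symm
    refine Finset.sum_eq_zero fun c _ => ?_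
    rcases eq_or_ne c a with rfl | hca
    · rw [hG _ hw c c, hGt _ hw c c, if_pos rfl, if_pos rfl]
      ring
    rw [hG _ hw a c, hG _ hw c a, hGt _ hw a c, hGt _ hw c a, if_neg (Ne.symm hca),
      if_neg hca, if_neg (Ne.symm hca), if_neg hca]
    have h2 := hne a c (Ne.symm hca)
    have h3 := hne c a hca
    field_simp
    ring
  · rw [hdS a b hab, hdT a b hab, ← hsum a b hab]
    simp only [Matrix.sub_apply]
    rw [hGz a b hab, hGtz a b hab]
    have h1 := hne a b hab
    field_simp
    ring
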